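/- Let N be a positive integer, let C > 0, and let f : [1,∞) → (0,∞). Suppose that for every δ > 0 and all subsets X, Y, Z of ℤ/Nℤ for which the number of triangles of (X,Y,Z) is at most δN², one can delete at most C·f(1/δ)·N elements in total from X, Y and Z so that no triangle of the resulting sets remains. Then every additive matching in ℤ/Nℤ has size at most C·f(N)·N. -/

import Mathlib

/-- An additive matching in an abelian group `G`: a finite indexed family of triples
`(x i, y i, z i)` such that `x i + y j + z k = 0` if and only if `i = j = k`. -/
def IsAddMatching {G : Type*} [AddCommGroup G] {I : Type*} (x y z : I → G) : Prop :=
  ∀ i j k : I, x i + y j + z k = 0 ↔ (i = j ∧ j = k)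

/-- The number of triangles of `(A, B, C)`: triples `(a,b,c) ∈ A × B × C` with `a+b+c = 0`. -/
def triangleCount {G : Type*} [AddCommGroup G] [DecidableEq G] (A B C : Finset G) : ℕ :=
  ((A ×ˢ B ×ˢ C).filter fun p => p.1 + p.2.1 + p.2.2 = 0).card

theorem stmt4 (N : ℕ) (hN : 0 < N) (C : ℝ) (hC : 0 < C) (f : ℝ → ℝ)
    (hf_pos : ∀ x : ℝ, 1 ≤ x → 0 < f x)
    (hrem : ∀ δ : ℝ, 0 < δ → ∀ X Y Z : Finset (ZMod N),
      (triangleCount X Y Z : ℝ) ≤ δ * N ^ 2 →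
      ∃ X' Y' Z' : Finset (ZMod N), X' ⊆ X ∧ Y' ⊆ Y ∧ Z' ⊆ Z ∧
        (((X \ X').card + (Y \ Y').card + (Z \ Z').card : ℕ) : ℝ) ≤ C * f (1 / δ) * N ∧
        triangleCount X' Y' Z' = 0)
    {I : Type} [Fintype I] (x y z : I → ZMod N) (h : IsAddMatching x y z) :
    (Fintype.card I : ℝ) ≤ C * f N * N := by
  haveI : NeZero N := ⟨hN.ne'⟩
  classical
  -- injectivity
  have hsum : ∀ i, x i + y i + z i = 0 := fun i => (h i i i).2 ⟨rfl, rfl⟩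
  have hinjx : Function.Injective x := by
    intro i j hij
    have : x i + y j + z j = 0 := by rw [hij]; exact hsum j
    exact ((h i j j).1 this).1
  have hinjy : Function.Injective y := by
    intro i j hij
    have : x j + y i + z j = 0 := by rw [hij]; exact hsum j
    exact ((h j i j).1 this).1.symm
  have hinjz : Function.Injective z := by
    intro i j hij
    have : x j + y j + z i = 0 := by rw [hij]; exact hsum j
    exact ((h j j i).1 this).2.symm
  set X : Finset (ZMod N) := Finset.univ.image x with hX
  set Y : Finset (ZMod N) := Finset.univ.image y with hY
  set Z : Finset (ZMod N) := Finset.univ.image z with hZ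
  have hmN : Fintype.card I ≤ N := by
    have := Fintype.card_le_of_injective x hinjx
    simpa using this
  -- triangle count of X Y Z equals card I
  have htc : triangleCount X Y Z = Fintype.card I := by
    unfold triangleCount
    have : ((X ×ˢ Y ×ˢ Z).filter fun p => p.1 + p.2.1 + p.2.2 = 0) =
        Finset.univ.image (fun i => (x i, y i, z i)) := by
      ext ⟨a, b, c⟩
      simp only [Finset.mem_filter, Finset.mem_product, Finset.mem_image, Finset.mem_univ,
        true_and, hX, hY, hZ]
      constructor
      · rintro ⟨⟨⟨i, _, rfl⟩, ⟨j, _, rfl⟩, ⟨k, _, rfl⟩⟩, hsum0⟩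
        obtain ⟨rfl, rfl⟩ := (h i j k).1 hsum0
        exact ⟨i, rfl⟩
      · rintro ⟨i, heq⟩
        injection heq with h1 h23
        injection h23 with h2 h3
        subst h1; subst h2; subst h3
        exact ⟨⟨⟨i, rfl⟩, ⟨i, rfl⟩, ⟨i, rfl⟩⟩, hsum i⟩
    rw [this, Finset.card_image_of_injective _ (fun i j hij => hinjx (congrArg Prod.fst hij))]
    simp
  have hNpos : (0:ℝ) < N := by exact_mod_cast hN
  have hδ : (0:ℝ) < 1 / N := by positivity
  obtain ⟨X', Y', Z', hX', hY', hZ', hbound, htc'⟩ := hrem (1 / N) hδ X Y Z (by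
    rw [htc]
    have : (1 / (N:ℝ)) * N ^ 2 = N := by field_simp
    rw [this]
    exact_mod_cast hmN)
  have hfN : 1 / (1 / (N:ℝ)) = N := by field_simp
  rw [hfN] at hbound
  -- each i has a deleted coordinate
  have hdel : ∀ i : I, x i ∉ X' ∨ y i ∉ Y' ∨ z i ∉ Z' := by
    intro i
    by_contra hcon
    push_neg at hcon
    obtain ⟨h1, h2, h3⟩ := hcon
    have : (x i, y i, z i) ∈ (X' ×ˢ Y' ×ˢ Z').filter fun p => p.1 + p.2.1 + p.2.2 = 0 := by
      simp [h1, h2, h3, hsum i]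
    have := Finset.card_pos.2 ⟨_, this⟩
    rw [show ((X' ×ˢ Y' ×ˢ Z').filter fun p => p.1 + p.2.1 + p.2.2 = 0).card
        = triangleCount X' Y' Z' from rfl, htc'] at this
    exact absurd this (lt_irrefl 0)
  set A : Finset I := Finset.univ.filter (fun i => x i ∉ X') with hA
  set B : Finset I := Finset.univ.filter (fun i => y i ∉ Y') with hB
  set D : Finset I := Finset.univ.filter (fun i => z i ∉ Z') with hD
  have hcover : (Finset.univ : Finset I) ⊆ A ∪ B ∪ D := by
    intro i _
    rcases hdel i with h1 | h2 | h3
    · exact Finset.mem_union_left _ (Finset.mem_union_left _ (by simp [hA, h1]))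
    · exact Finset.mem_union_left _ (Finset.mem_union_right _ (by simp [hB, h2]))
    · exact Finset.mem_union_right _ (by simp [hD, h3])
  have hcard : Fintype.card I ≤ A.card + B.card + D.card := by
    calc Fintype.card I = (Finset.univ : Finset I).card := (Finset.card_univ).symm
      _ ≤ (A ∪ B ∪ D).card := Finset.card_le_card hcover
      _ ≤ (A ∪ B).card + D.card := Finset.card_union_le _ _
      _ ≤ A.card + B.card + D.card := by
          have := Finset.card_union_le A B
          omega
  have hAle : A.card ≤ (X \ X').card := by
    apply Finset.card_le_card_of_injOn x
    · intro i hi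
      simp only [hA, Finset.mem_filter] at hi
      exact Finset.mem_sdiff.2 ⟨by simp [hX], (Finset.mem_filter.1 hi).2⟩
    · exact fun a _ b _ hab => hinjx hab
  have hBle : B.card ≤ (Y \ Y').card := by
    apply Finset.card_le_card_of_injOn y
    · intro i hi
      simp only [hB, Finset.mem_filter] at hi
      exact Finset.mem_sdiff.2 ⟨by simp [hY], (Finset.mem_filter.1 hi).2⟩
    · exact fun a _ b _ hab => hinjy hab
  have hDle : D.card ≤ (Z \ Z').card := by
    apply Finset.card_le_card_of_injOn z
    · intro i hi
      simp only [hD, Finset.mem_filter] at hi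
      exact Finset.mem_sdiff.2 ⟨by simp [hZ], (Finset.mem_filter.1 hi).2⟩
    · exact fun a _ b _ hab => hinjz hab
  have : Fintype.card I ≤ (X \ X').card + (Y \ Y').card + (Z \ Z').card := by omega
  calc (Fintype.card I : ℝ)
      ≤ (((X \ X').card + (Y \ Y').card + (Z \ Z').card : ℕ) : ℝ) := by exact_mod_cast this
    _ ≤ C * f N * N := hbound
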